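/- It is not true in general that the Eisenberg-Noe model yields lower final global vulnerability than the acyclic DebtRank model: there exists a 3-bank chain network where, after a 100% shock on external assets, the EN model ends with all banks defaulted (h^{EN}(∞) = (1,1,1)) while the acyclic DebtRank ends with h^{aDR}(∞) = (1, 1, 32/49), so H^{EN}(∞) > H^{aDR}(∞). The example: equities E(0) = (15, 35, 35), external assets A^e = (100, 5, 20), interbank assets A^b_{21} = 50, A^b_{32} = 20, and no other interbank links. -/

import Mathlib

open scoped Classical

/-- Counterexample showing EN can exceed aDR: on the 3-bank chain with
E(0) = (15,35,35), A^e = (100,5,20), A^b_{21}=50, A^b_{32}=20, after a 100% shock on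
external assets, EN ends with h = (1,1,1) while aDR ends with h = (1,1,32/49), so
H^EN(∞) > H^aDR(∞). -/
theorem en_not_le_adr_counterexample
    (E0 Ae : Fin 3 → ℝ) (hE0 : E0 = ![15, 35, 35]) (hAe : Ae = ![100, 5, 20])
    (Ab : Matrix (Fin 3) (Fin 3) ℝ)
    (hAb : Ab = ![![0, 0, 0], ![50, 0, 0], ![0, 20, 0]])
    (pbar : Fin 3 → ℝ) (hpbar : pbar = ![85, 20, 5])
    (Pm : Matrix (Fin 3) (Fin 3) ℝ) (hPm : ∀ i j, Pm i j = Ab j i / pbar i)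
    (p : ℕ → Fin 3 → ℝ) (hp1 : ∀ i, p 1 i = pbar i)
    (hpupd : ∀ t, 1 ≤ t → ∀ i,
      p (t+1) i = min (pbar i) (∑ j, Pm j i * p t j + (1 - 1) * Ae i))
    (hEN : ℕ → Fin 3 → ℝ)
    (hENdef : ∀ t, 1 ≤ t → ∀ i, hEN t i =
      (E0 i - max 0 (∑ j, Pm j i * p t j + (1 - 1) * Ae i - p t i)) / E0 i)
    (haDR : ℕ → Fin 3 → ℝ) (haDR0 : ∀ i, haDR 0 i = 0)
    (haDR1 : ∀ i, haDR 1 i = min 1 (Ae i / E0 i))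
    (haDRupd : ∀ t, 1 ≤ t → ∀ i, haDR (t+1) i =
      min 1 (haDR t i + ∑ j,
        if 0 < haDR t j ∧ (∀ t' < t, haDR t' j = 0) then (Ab i j / E0 i) * haDR t j else 0)) :
    ∃ T, 1 ≤ T ∧ ∀ t, T ≤ t →
      (∀ i, hEN t i = 1) ∧ (haDR t = ![1, 1, 32/49]) ∧
      (∑ i, E0 i * haDR t i) / (∑ i, E0 i) < (∑ i, E0 i * hEN t i) / (∑ i, E0 i) := by
  subst hE0 hAe hAb hpbar
  -- payment dynamics
  have hp2 : ∀ i, p 2 i = ![(0:ℝ), 20, 5] i := by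
    intro i
    have h := hpupd 1 le_rfl i
    norm_num at h
    rw [h]
    fin_cases i <;>
      simp [Fin.sum_univ_three, hPm, hp1] <;> norm_num
  have hp3 : ∀ i, p 3 i = ![(0:ℝ), 0, 5] i := by
    intro i
    have h := hpupd 2 (by norm_num) i
    norm_num at h
    rw [h]
    fin_cases i <;>
      simp [Fin.sum_univ_three, hPm, hp2] <;> norm_num
  have hp4 : ∀ i, p 4 i = 0 := by
    intro i
    have h := hpupd 3 (by norm_num) i
    norm_num at h
    rw [h]
    fin_cases i <;>
      simp [Fin.sum_univ_three, hPm, hp3] <;> norm_num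
  have hp0 : ∀ t, 4 ≤ t → ∀ i, p t i = 0 := by
    intro t ht
    induction t, ht using Nat.le_induction with
    | base => exact hp4
    | succ t ht ih =>
      intro i
      have h := hpupd t (by omega) i
      rw [h]
      have hsum : (∑ j, Pm j i * p t j) = 0 := by
        simp [Fin.sum_univ_three, ih]
      rw [hsum]
      fin_cases i <;> norm_num
  -- EN vulnerabilities
  have hENone : ∀ t, 4 ≤ t → ∀ i, hEN t i = 1 := by
    intro t ht i
    rw [hENdef t (by omega) i]
    have hsum : (∑ j, Pm j i * p t j) = 0 := by
      simp [Fin.sum_univ_three, hp0 t ht]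
    rw [hsum, hp0 t ht i]
    fin_cases i <;> norm_num
  -- aDR dynamics
  have h1val : ∀ i, haDR 1 i = ![(1:ℝ), 1/7, 4/7] i := by
    intro i
    rw [haDR1]
    fin_cases i <;> norm_num
  have hcond : ∀ j, (0 < haDR 1 j ∧ ∀ t' < 1, haDR t' j = 0) := by
    intro j
    refine ⟨?_, ?_⟩
    · rw [h1val j]; fin_cases j <;> norm_num
    · intro t' ht'
      have : t' = 0 := by omega
      subst this
      exact haDR0 j
  have h2val : ∀ i, haDR 2 i = ![(1:ℝ), 1, 32/49] i := by
    intro i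
    have h := haDRupd 1 le_rfl i
    norm_num at h
    rw [h]
    rw [Fin.sum_univ_three, if_pos ⟨(hcond 0).1, haDR0 0⟩, if_pos ⟨(hcond 1).1, haDR0 1⟩,
      if_pos ⟨(hcond 2).1, haDR0 2⟩, h1val 0, h1val 1, h1val 2, h1val i]
    fin_cases i <;> norm_num [Matrix.cons_val_two, Matrix.vecHead, Matrix.vecTail]
  have hstable : ∀ t, 2 ≤ t → ∀ i, haDR t i = ![(1:ℝ), 1, 32/49] i := by
    intro t ht
    induction t, ht using Nat.le_induction with
    | base => exact h2val
    | succ t ht ih =>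
      intro i
      have h := haDRupd t (by omega) i
      rw [h]
      have hneg : ∀ j : Fin 3,
          ¬(0 < haDR t j ∧ ∀ t' < t, haDR t' j = 0) := by
        intro j hc
        have h1 := hc.2 1 (by omega)
        have h2 := (hcond j).1
        rw [h1] at h2
        exact lt_irrefl 0 h2
      rw [Fin.sum_univ_three, if_neg (hneg 0), if_neg (hneg 1), if_neg (hneg 2), ih i]
      fin_cases i <;> norm_num
  refine ⟨4, by norm_num, fun t ht => ?_⟩
  have hDR : haDR t = ![(1:ℝ), 1, 32/49] := funext (hstable t (by omega))
  refine ⟨hENone t ht, hDR, ?_⟩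
  rw [Fin.sum_univ_three, Fin.sum_univ_three, Fin.sum_univ_three,
    hDR, hENone t ht 0, hENone t ht 1, hENone t ht 2]
  norm_num [Matrix.cons_val_two, Matrix.vecHead, Matrix.vecTail]
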